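/- Let d ≥ 2. On ℂ^d define X^j = |0⟩⟨j| + |j⟩⟨0| and Y^j = −i|0⟩⟨j| + i|j⟩⟨0| for 1 ≤ j ≤ d−1, and on ℂ^d ⊗ ℂ^d define M = (1/(2√(d−1))) ∑_{j=1}^{d−1} (X^j + Y^j) ⊗ (X^j + Y^j). Then for every real t, exp(−i t M)(e₀ ⊗ e₀) = cos t · (e₀ ⊗ e₀) + (sin t / √(d−1)) ∑_{j=1}^{d−1} e_j ⊗ e_j, where {e_j} is the standard basis of ℂ^d. In particular, at T = arccos(1/√d) the evolved vector equals (1/√d) ∑_{j=0}^{d−1} e_j ⊗ e_j, a maximally entangled state. -/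

import Mathlib

open scoped Matrix Kronecker ComplexOrder

noncomputable section

/-- Hermitian inner product on `n → ℂ` (conjugate-linear in the first argument). -/
def cinner {n : Type*} [Fintype n] (v w : n → ℂ) : ℂ :=
  ∑ i, (starRingEnd ℂ) (v i) * w i

/-- Tensor (Kronecker) product of vectors. -/
def tensorVec {α β : Type*} (v : α → ℂ) (w : β → ℂ) : α × β → ℂ :=
  fun p => v p.1 * w p.2

/-- The projector `|v⟩⟨v|`. -/
def vecProj {n : Type*} (v : n → ℂ) : Matrix n n ℂ :=
  Matrix.of fun i j => v i * (starRingEnd ℂ) (v j)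

/-- A density matrix: positive semidefinite with unit trace. -/
def IsDensityMatrix {n : Type*} [Fintype n] (ρ : Matrix n n ℂ) : Prop :=
  ρ.PosSemidef ∧ ρ.trace = 1

open Classical in
/-- Positive semidefinite square root (0 on non-PSD input). -/
def msqrt {n : Type*} [Fintype n] [DecidableEq n] (ρ : Matrix n n ℂ) : Matrix n n ℂ :=
  if h : ρ.PosSemidef then
    h.1.eigenvectorUnitary.1 * Matrix.diagonal ((↑) ∘ (√·) ∘ h.1.eigenvalues) *
      (star h.1.eigenvectorUnitary : Matrix n n ℂ)
  else 0

/-- Uhlmann root fidelity `F(ρ,σ) = tr √(√ρ σ √ρ)`. -/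
def rootFidelity {n : Type*} [Fintype n] [DecidableEq n] (ρ σ : Matrix n n ℂ) : ℝ :=
  ((msqrt (msqrt ρ * σ * msqrt ρ)).trace).re

/-- Partial trace over the second tensor factor. -/
def ptraceC {α γ : Type*} [Fintype γ] (ρ : Matrix (α × γ) (α × γ) ℂ) : Matrix α α ℂ :=
  Matrix.of fun i j => ∑ k, ρ (i, k) (j, k)

/-- Partial trace over the first tensor factor. -/
def ptraceA {α β : Type*} [Fintype α] (ρ : Matrix (α × β) (α × β) ℂ) : Matrix β β ℂ :=
  Matrix.of fun i j => ∑ k, ρ (k, i) (k, j)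

/-- Partial transpose on the second tensor factor. -/
def ptB {α β : Type*} (ρ : Matrix (α × β) (α × β) ℂ) : Matrix (α × β) (α × β) ℂ :=
  Matrix.of fun p q => ρ (p.1, q.2) (q.1, p.2)

open Classical in
/-- Negativity: the sum of the absolute values of the negative eigenvalues of
the partial transpose (0 if the partial transpose is not Hermitian). -/
def negativity {α β : Type*} [Fintype α] [Fintype β] [DecidableEq α] [DecidableEq β]
    (ρ : Matrix (α × β) (α × β) ℂ) : ℝ :=
  if h : (ptB ρ).IsHermitian then ∑ i, max 0 (- h.eigenvalues i) else 0

/-- A family of vectors is an orthonormal basis family (orthonormal, indexed by the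
same finite type as the dimension, hence a basis). -/
def IsONB {n : Type*} [Fintype n] [DecidableEq n] (x : n → n → ℂ) : Prop :=
  ∀ j k, cinner (x j) (x k) = if j = k then 1 else 0

/-- Separability: a finite convex combination of projectors onto product unit vectors. -/
def IsSeparableDM {α β : Type*} [Fintype α] [Fintype β]
    (ρ : Matrix (α × β) (α × β) ℂ) : Prop :=
  ∃ (m : ℕ) (p : Fin m → ℝ) (a : Fin m → α → ℂ) (b : Fin m → β → ℂ),
    (∀ j, 0 ≤ p j) ∧ (∑ j, p j = 1) ∧
    (∀ j, cinner (a j) (a j) = 1) ∧ (∀ j, cinner (b j) (b j) = 1) ∧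
    ρ = ∑ j, (p j : ℂ) • vecProj (tensorVec (a j) (b j))

/-- A maximally entangled state on `ℂ^d ⊗ ℂ^d`. -/
def IsMaxEnt {d : ℕ} (Ψ : Fin d × Fin d → ℂ) : Prop :=
  ∃ x y : Fin d → Fin d → ℂ, IsONB x ∧ IsONB y ∧
    Ψ = ((Real.sqrt d : ℂ)⁻¹) • ∑ j, tensorVec (x j) (y j)

/-- Standard basis vector `e_j` of `ℂ^d`. -/
def ket {d : ℕ} (j : Fin d) : Fin d → ℂ := fun i => if i = j then 1 else 0

/-- The vector `e₀` of `ℂ^d` (first standard basis vector). -/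
def e₀ (d : ℕ) : Fin d → ℂ := fun i => if (i : ℕ) = 0 then 1 else 0

/-- `X^j = |0⟩⟨j| + |j⟩⟨0|`. -/
def Xop {d : ℕ} (j : Fin d) : Matrix (Fin d) (Fin d) ℂ :=
  Matrix.of fun a b =>
    (if (a : ℕ) = 0 ∧ b = j then 1 else 0) + (if a = j ∧ (b : ℕ) = 0 then 1 else 0)

/-- `Y^j = -i|0⟩⟨j| + i|j⟩⟨0|`. -/
def Yop {d : ℕ} (j : Fin d) : Matrix (Fin d) (Fin d) ℂ :=
  Matrix.of fun a b =>
    (-Complex.I) * (if (a : ℕ) = 0 ∧ b = j then 1 else 0) +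
      Complex.I * (if a = j ∧ (b : ℕ) = 0 then 1 else 0)

/-- The optimal direct-interaction Hamiltonian (in units of `ħΩ`),
`M = (1/(2√(d-1))) ∑_{j=1}^{d-1} (X^j + Y^j) ⊗ (X^j + Y^j)`. -/
def Mdi (d : ℕ) : Matrix (Fin d × Fin d) (Fin d × Fin d) ℂ :=
  (((2 * Real.sqrt ((d : ℝ) - 1) : ℝ) : ℂ))⁻¹ •
    ∑ j ∈ Finset.univ.filter fun j : Fin d => (j : ℕ) ≠ 0,
      (Xop j + Yop j) ⊗ₖ (Xop j + Yop j)


namespace DirectDynAux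

lemma fin_val_zero_iff {d : ℕ} [NeZero d] (i : Fin d) : (i : ℕ) = 0 ↔ i = 0 := by
  rw [Fin.ext_iff, Fin.val_zero]

lemma kron_mulVec {d : ℕ} (M N : Matrix (Fin d) (Fin d) ℂ) (v w : Fin d → ℂ) :
    (M ⊗ₖ N) *ᵥ tensorVec v w = tensorVec (M *ᵥ v) (N *ᵥ w) := by
  funext p
  simp only [Matrix.mulVec, dotProduct, tensorVec, Matrix.kroneckerMap_apply,
    Fintype.sum_prod_type, Finset.sum_mul_sum]
  refine Finset.sum_congr rfl fun a _ => Finset.sum_congr rfl fun b _ => by ring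

lemma tensorVec_smul {d : ℕ} (a b : ℂ) (v w : Fin d → ℂ) :
    tensorVec (a • v) (b • w) = (a * b) • tensorVec v w := by
  funext p; simp only [tensorVec, Pi.smul_apply, smul_eq_mul]; ring

lemma tensorVec_zero {d : ℕ} (w : Fin d → ℂ) : tensorVec (0 : Fin d → ℂ) w = 0 := by
  funext p; simp [tensorVec]

lemma XY_e0 {d : ℕ} (hd : 2 ≤ d) (j : Fin d) (hj : (j : ℕ) ≠ 0) :
    (Xop j + Yop j) *ᵥ e₀ d = ((1 : ℂ) + Complex.I) • ket j := by
  haveI : NeZero d := ⟨by omega⟩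
  have hj' : j ≠ 0 := fun h => hj (by simp [h])
  funext a
  show (∑ b, ((Xop j + Yop j) a b) * (e₀ d b)) = _
  rw [Finset.sum_eq_single (0 : Fin d)]
  · simp only [Matrix.add_apply, Xop, Yop, Matrix.of_apply, e₀, ket, Fin.val_zero,
      Pi.smul_apply, smul_eq_mul]
    by_cases h : a = j <;>
      simp [h, Ne.symm hj', hj'] <;> ring
  · intro b _ hb
    have hb' : (b : ℕ) ≠ 0 := fun h => hb ((fin_val_zero_iff b).mp h)
    simp [e₀, hb']
  · simp

lemma XY_ket {d : ℕ} (hd : 2 ≤ d) (j k : Fin d) (hj : (j : ℕ) ≠ 0) (hk : (k : ℕ) ≠ 0) :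
    (Xop j + Yop j) *ᵥ ket k = if k = j then ((1 : ℂ) - Complex.I) • e₀ d else 0 := by
  haveI : NeZero d := ⟨by omega⟩
  have hj' : j ≠ 0 := fun h => hj (by simp [h])
  have hk' : k ≠ 0 := fun h => hk (by simp [h])
  funext a
  show (∑ b, ((Xop j + Yop j) a b) * (ket k b)) = _
  rw [Finset.sum_eq_single k]
  · simp only [Matrix.add_apply, Xop, Yop, Matrix.of_apply, e₀, ket, if_pos rfl, mul_one]
    by_cases h : k = j
    · subst h
      by_cases ha : (a : ℕ) = 0 <;> simp [ha, hk, Pi.smul_apply, e₀] <;> ring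
    · simp only [h, and_false, if_false, hk, and_false, if_false, if_false]
      by_cases ha : (a:ℕ) = 0 <;> simp [ha, h, hk, Pi.zero_apply]
  · intro b _ hb; simp [ket, hb]
  · simp

end DirectDynAux

namespace DirectDynAux2
open DirectDynAux

def wvec (d : ℕ) : Fin d × Fin d → ℂ :=
  ∑ j ∈ Finset.univ.filter fun j : Fin d => (j : ℕ) ≠ 0, tensorVec (ket j) (ket j)

lemma sum_mulVec {N : Type*} [Fintype N] {ι : Type*} (s : Finset ι)
    (f : ι → Matrix N N ℂ) (v : N → ℂ) :
    (∑ i ∈ s, f i) *ᵥ v = ∑ i ∈ s, (f i *ᵥ v) := by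
  funext x
  simp only [Matrix.mulVec, dotProduct, Finset.sum_apply, Matrix.sum_apply,
    Finset.sum_mul]
  exact Finset.sum_comm

lemma mulVec_sumv {N : Type*} [Fintype N] {ι : Type*} (s : Finset ι)
    (M : Matrix N N ℂ) (v : ι → N → ℂ) :
    M *ᵥ (∑ i ∈ s, v i) = ∑ i ∈ s, (M *ᵥ v i) := by
  funext x
  simp only [Matrix.mulVec, dotProduct, Finset.sum_apply, Finset.mul_sum]
  exact Finset.sum_comm

lemma sqrt_pos {d : ℕ} (hd : 2 ≤ d) : 0 < Real.sqrt ((d : ℝ) - 1) := by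
  apply Real.sqrt_pos.mpr
  have : (2 : ℝ) ≤ (d : ℝ) := by exact_mod_cast hd
  linarith

lemma M_u {d : ℕ} (hd : 2 ≤ d) :
    Mdi d *ᵥ tensorVec (e₀ d) (e₀ d) =
      (Complex.I * ((Real.sqrt ((d : ℝ) - 1) : ℝ) : ℂ)⁻¹) • wvec d := by
  have hs : ((Real.sqrt ((d : ℝ) - 1) : ℝ) : ℂ) ≠ 0 := by
    exact_mod_cast (sqrt_pos hd).ne'
  rw [Mdi, Matrix.smul_mulVec, sum_mulVec]
  have h1 : ∀ j ∈ Finset.univ.filter fun j : Fin d => (j : ℕ) ≠ 0,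
      ((Xop j + Yop j) ⊗ₖ (Xop j + Yop j)) *ᵥ tensorVec (e₀ d) (e₀ d) =
        (((1 : ℂ) + Complex.I) * ((1 : ℂ) + Complex.I)) • tensorVec (ket j) (ket j) := by
    intro j hj
    rw [kron_mulVec, XY_e0 hd j (by simpa using hj), tensorVec_smul]
  rw [Finset.sum_congr rfl h1, ← Finset.smul_sum]
  rw [smul_smul, ← wvec]
  congr 1
  have : ((2 * Real.sqrt ((d : ℝ) - 1) : ℝ) : ℂ) =
      2 * ((Real.sqrt ((d : ℝ) - 1) : ℝ) : ℂ) := by push_cast; ring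
  rw [this]
  have hI := Complex.I_sq
  field_simp
  ring_nf
  rw [Complex.I_sq]
  ring

lemma card_filter {d : ℕ} (hd : 2 ≤ d) :
    (Finset.univ.filter fun j : Fin d => (j : ℕ) ≠ 0).card = d - 1 := by
  haveI : NeZero d := ⟨by omega⟩
  have : (Finset.univ.filter fun j : Fin d => (j : ℕ) ≠ 0) =
      Finset.univ.erase (0 : Fin d) := by
    ext j
    simp [fin_val_zero_iff, Finset.mem_erase, and_comm]
  rw [this, Finset.card_erase_of_mem (Finset.mem_univ _), Finset.card_univ, Fintype.card_fin]

lemma M_w {d : ℕ} (hd : 2 ≤ d) :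
    Mdi d *ᵥ wvec d =
      (-Complex.I * ((Real.sqrt ((d : ℝ) - 1) : ℝ) : ℂ)) • tensorVec (e₀ d) (e₀ d) := by
  have hs : ((Real.sqrt ((d : ℝ) - 1) : ℝ) : ℂ) ≠ 0 := by
    exact_mod_cast (sqrt_pos hd).ne'
  rw [Mdi, Matrix.smul_mulVec, sum_mulVec]
  have h1 : ∀ j ∈ Finset.univ.filter fun j : Fin d => (j : ℕ) ≠ 0,
      ((Xop j + Yop j) ⊗ₖ (Xop j + Yop j)) *ᵥ wvec d =
        (((1 : ℂ) - Complex.I) * ((1 : ℂ) - Complex.I)) • tensorVec (e₀ d) (e₀ d) := by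
    intro j hj
    have hj' : (j : ℕ) ≠ 0 := by simpa using hj
    rw [wvec, mulVec_sumv]
    have h2 : ∀ k ∈ Finset.univ.filter fun k : Fin d => (k : ℕ) ≠ 0,
        ((Xop j + Yop j) ⊗ₖ (Xop j + Yop j)) *ᵥ tensorVec (ket k) (ket k) =
          if k = j then
            (((1 : ℂ) - Complex.I) * ((1 : ℂ) - Complex.I)) • tensorVec (e₀ d) (e₀ d)
          else 0 := by
      intro k hk
      have hk' : (k : ℕ) ≠ 0 := by simpa using hk
      rw [kron_mulVec, XY_ket hd j k hj' hk']
      by_cases h : k = j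
      · simp [h, tensorVec_smul]
      · simp [h, tensorVec_zero]
    rw [Finset.sum_congr rfl h2, Finset.sum_ite_eq' _ j, if_pos (by simpa using hj')]
  rw [Finset.sum_congr rfl h1, Finset.sum_const, card_filter hd]
  rw [← Nat.cast_smul_eq_nsmul ℂ, smul_smul, smul_smul]
  congr 1
  have hc : ((2 * Real.sqrt ((d : ℝ) - 1) : ℝ) : ℂ) =
      2 * ((Real.sqrt ((d : ℝ) - 1) : ℝ) : ℂ) := by push_cast; ring
  have hdd : ((d - 1 : ℕ) : ℂ) =
      ((Real.sqrt ((d : ℝ) - 1) : ℝ) : ℂ) * ((Real.sqrt ((d : ℝ) - 1) : ℝ) : ℂ) := by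
    have h0 : (0 : ℝ) ≤ (d : ℝ) - 1 := by
      have : (2 : ℝ) ≤ (d : ℝ) := by exact_mod_cast hd
      linarith
    have := Real.mul_self_sqrt h0
    have hcast : ((d - 1 : ℕ) : ℝ) = (d : ℝ) - 1 := by
      have : 1 ≤ d := by omega
      push_cast [this]; ring
    rw [← Complex.ofReal_mul, this, ← hcast]
    norm_num
  rw [hc, hdd]
  field_simp
  ring_nf
  rw [Complex.I_sq]
  ring

end DirectDynAux2

namespace DirectDynAux3
open DirectDynAux DirectDynAux2

variable {d : ℕ}

lemma A_u (hd : 2 ≤ d) (t : ℝ) :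
    ((-(Complex.I * (t : ℂ))) • Mdi d) *ᵥ tensorVec (e₀ d) (e₀ d) =
      ((t : ℂ) * ((Real.sqrt ((d : ℝ) - 1) : ℝ) : ℂ)⁻¹) • wvec d := by
  rw [Matrix.smul_mulVec, M_u hd, smul_smul]
  congr 1
  ring_nf
  rw [Complex.I_sq]
  ring

lemma A_w (hd : 2 ≤ d) (t : ℝ) :
    ((-(Complex.I * (t : ℂ))) • Mdi d) *ᵥ wvec d =
      (-((t : ℂ) * ((Real.sqrt ((d : ℝ) - 1) : ℝ) : ℂ))) • tensorVec (e₀ d) (e₀ d) := by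
  rw [Matrix.smul_mulVec, M_w hd, smul_smul]
  congr 1
  ring_nf
  rw [Complex.I_sq]
  ring

lemma A_pow (hd : 2 ≤ d) (t : ℝ) (n : ℕ) :
    ((-(Complex.I * (t : ℂ))) • Mdi d) ^ (2 * n) *ᵥ tensorVec (e₀ d) (e₀ d) =
        ((-((t : ℂ) ^ 2)) ^ n) • tensorVec (e₀ d) (e₀ d) ∧
      ((-(Complex.I * (t : ℂ))) • Mdi d) ^ (2 * n) *ᵥ wvec d =
        ((-((t : ℂ) ^ 2)) ^ n) • wvec d := by
  have hs : ((Real.sqrt ((d : ℝ) - 1) : ℝ) : ℂ) ≠ 0 := by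
    exact_mod_cast (sqrt_pos hd).ne'
  set A := (-(Complex.I * (t : ℂ))) • Mdi d with hA
  induction n with
  | zero => simp [Matrix.one_mulVec]
  | succ n ih =>
    have h2 : 2 * (n + 1) = (2 * n + 1) + 1 := by ring
    constructor
    · rw [h2, pow_succ, pow_succ, ← Matrix.mulVec_mulVec, ← Matrix.mulVec_mulVec]
      rw [hA] at ih ⊢
      simp only [A_u hd t, A_w hd t, Matrix.mulVec_smul, ih.1, ih.2, smul_smul]
      rw [pow_succ]
      congr 1
      field_simp
      ring
    · rw [h2, pow_succ, pow_succ, ← Matrix.mulVec_mulVec, ← Matrix.mulVec_mulVec]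
      rw [hA] at ih ⊢
      simp only [A_u hd t, A_w hd t, Matrix.mulVec_smul, ih.1, ih.2, smul_smul]
      rw [pow_succ]
      congr 1
      field_simp
      ring

lemma A_pow_odd (hd : 2 ≤ d) (t : ℝ) (n : ℕ) :
    ((-(Complex.I * (t : ℂ))) • Mdi d) ^ (2 * n + 1) *ᵥ tensorVec (e₀ d) (e₀ d) =
      (((-((t : ℂ) ^ 2)) ^ n) * ((t : ℂ) * ((Real.sqrt ((d : ℝ) - 1) : ℝ) : ℂ)⁻¹)) •
        wvec d := by
  rw [pow_succ, ← Matrix.mulVec_mulVec, A_u hd t, Matrix.mulVec_smul, (A_pow hd t n).2,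
    smul_smul]
  ring_nf

lemma exp_mulVec_hasSum {N : Type*} [Fintype N] [DecidableEq N] [Nonempty N]
    (A : Matrix N N ℂ) (v : N → ℂ) :
    HasSum (fun n : ℕ => ((n.factorial : ℂ))⁻¹ • (A ^ n *ᵥ v))
      (NormedSpace.exp A *ᵥ v) := by
  letI : SeminormedRing (Matrix N N ℂ) := Matrix.linftyOpSemiNormedRing
  letI : NormedRing (Matrix N N ℂ) := Matrix.linftyOpNormedRing
  letI : NormedAlgebra ℂ (Matrix N N ℂ) := Matrix.linftyOpNormedAlgebra
  have hsum : Summable fun n : ℕ => ((n.factorial : ℂ))⁻¹ • A ^ n :=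
    NormedSpace.expSeries_summable' (𝕂 := ℂ) A
  have hexp : NormedSpace.exp A = ∑' n : ℕ, ((n.factorial : ℂ))⁻¹ • A ^ n := by
    rw [NormedSpace.exp_eq_tsum ℂ]
  let L : Matrix N N ℂ →ₗ[ℂ] (N → ℂ) :=
    { toFun := fun M => M *ᵥ v
      map_add' := fun M₁ M₂ => Matrix.add_mulVec M₁ M₂ v
      map_smul' := fun c M => Matrix.smul_mulVec c M v }
  have hc := hsum.hasSum.mapL (LinearMap.toContinuousLinearMap L)
  rw [← hexp] at hc
  simpa [L] using hc

end DirectDynAux3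


namespace DirectDynAux4
open DirectDynAux DirectDynAux2 DirectDynAux3

set_option maxHeartbeats 2000000 in
lemma dynamics {d : ℕ} (hd : 2 ≤ d) (t : ℝ) :
    NormedSpace.exp ((-(Complex.I * (t : ℂ))) • Mdi d) *ᵥ tensorVec (e₀ d) (e₀ d) =
      ((Real.cos t : ℝ) : ℂ) • tensorVec (e₀ d) (e₀ d) +
        (((Real.sin t : ℝ) : ℂ) / ((Real.sqrt ((d : ℝ) - 1) : ℝ) : ℂ)) • wvec d := by
  haveI : NeZero d := ⟨by omega⟩
  haveI : Nonempty (Fin d) := ⟨0⟩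
  set s : ℂ := ((Real.sqrt ((d : ℝ) - 1) : ℝ) : ℂ) with hsdef
  set A := (-(Complex.I * (t : ℂ))) • Mdi d with hA
  have H := exp_mulVec_hasSum A (tensorVec (e₀ d) (e₀ d))
  have heven : HasSum
      (fun k : ℕ => (((2 * k).factorial : ℂ))⁻¹ • (A ^ (2 * k) *ᵥ tensorVec (e₀ d) (e₀ d)))
      (Complex.cos (t : ℂ) • tensorVec (e₀ d) (e₀ d)) := by
    have h := (Complex.hasSum_cos (t : ℂ)).smul_const (tensorVec (e₀ d) (e₀ d))
    refine h.congr_fun fun k => ?_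
    rw [(A_pow hd t k).1, smul_smul]
    congr 1
    rw [neg_pow, ← pow_mul]
    ring
  have hodd : HasSum
      (fun k : ℕ => (((2 * k + 1).factorial : ℂ))⁻¹ •
        (A ^ (2 * k + 1) *ᵥ tensorVec (e₀ d) (e₀ d)))
      ((Complex.sin (t : ℂ) * s⁻¹) • wvec d) := by
    have h := ((Complex.hasSum_sin (t : ℂ)).mul_right s⁻¹).smul_const (wvec d)
    refine h.congr_fun fun k => ?_
    rw [A_pow_odd hd t, smul_smul]
    congr 1
    rw [neg_pow, ← pow_mul, pow_succ]
    ring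
  have htot := HasSum.even_add_odd (f := fun n : ℕ => ((n.factorial : ℂ))⁻¹ • (A ^ n *ᵥ tensorVec (e₀ d) (e₀ d))) heven hodd
  have heq := H.unique htot
  rw [heq, Complex.ofReal_cos, Complex.ofReal_sin, div_eq_mul_inv]
end DirectDynAux4

namespace DirectDynAux4
open DirectDynAux DirectDynAux2 DirectDynAux3

lemma sum_split {d : ℕ} (hd : 2 ≤ d) :
    tensorVec (e₀ d) (e₀ d) + wvec d = ∑ j : Fin d, tensorVec (ket j) (ket j) := by
  haveI : NeZero d := ⟨by omega⟩
  have he : e₀ d = ket (0 : Fin d) := by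
    funext i; simp [e₀, ket, fin_val_zero_iff]
  rw [← Finset.sum_filter_add_sum_filter_not Finset.univ (fun j : Fin d => (j : ℕ) ≠ 0)]
  have hnot : (Finset.univ.filter fun j : Fin d => ¬ ((j : ℕ) ≠ 0)) = {(0 : Fin d)} := by
    ext j; simp [fin_val_zero_iff]
  rw [hnot, Finset.sum_singleton, ← wvec, he, add_comm]

lemma onb_ket {d : ℕ} : IsONB (ket : Fin d → Fin d → ℂ) := by
  intro j k
  simp only [cinner, ket]
  rw [Finset.sum_eq_single j]
  · by_cases h : j = k <;> simp [h]
  · intro b _ hb; simp [hb]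
  · simp

lemma sqrt_div_lem {d : ℕ} (hd : 2 ≤ d) :
    Real.sqrt (1 - ((Real.sqrt d)⁻¹) ^ 2) / Real.sqrt ((d : ℝ) - 1) = (Real.sqrt d)⁻¹ := by
  have hd0 : (0 : ℝ) < d := by positivity
  have hd1 : (1 : ℝ) ≤ (d : ℝ) := by exact_mod_cast Nat.one_le_of_lt hd
  have hsd : (0 : ℝ) < Real.sqrt d := Real.sqrt_pos.mpr hd0
  have hsd1 : Real.sqrt ((d : ℝ) - 1) ≠ 0 := (sqrt_pos hd).ne'
  have h1 : ((Real.sqrt d)⁻¹) ^ 2 = 1 / d := by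
    rw [inv_pow, Real.sq_sqrt hd0.le, one_div]
  have h2 : 1 - ((Real.sqrt d)⁻¹) ^ 2 = ((d : ℝ) - 1) / d := by
    rw [h1]; field_simp
  rw [h2, Real.sqrt_div (by linarith) (d : ℝ)]
  field_simp

end DirectDynAux4


open DirectDynAux DirectDynAux2 DirectDynAux3 DirectDynAux4 in
/-- the optimal direct dynamics takes `|00⟩` to
`cos t |00⟩ + (sin t/√(d-1)) ∑_{j≥1} |jj⟩`, reaching the maximally entangled state
`(1/√d) ∑_j |jj⟩` at `T = arccos(1/√d)`. -/
theorem direct_dynamics_optimal (d : ℕ) (hd : 2 ≤ d) :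
    (∀ t : ℝ,
      NormedSpace.exp ((-(Complex.I * (t : ℂ))) • Mdi d) *ᵥ tensorVec (e₀ d) (e₀ d) =
        ((Real.cos t : ℝ) : ℂ) • tensorVec (e₀ d) (e₀ d) +
          (((Real.sin t : ℝ) : ℂ) / ((Real.sqrt ((d : ℝ) - 1) : ℝ) : ℂ)) •
            ∑ j ∈ Finset.univ.filter fun j : Fin d => (j : ℕ) ≠ 0,
              tensorVec (ket j) (ket j)) ∧
    NormedSpace.exp ((-(Complex.I * ((Real.arccos (Real.sqrt d)⁻¹ : ℝ) : ℂ))) • Mdi d) *ᵥ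
        tensorVec (e₀ d) (e₀ d) =
      (((Real.sqrt d : ℝ) : ℂ))⁻¹ • ∑ j : Fin d, tensorVec (ket j) (ket j) ∧
    IsMaxEnt ((((Real.sqrt d : ℝ) : ℂ))⁻¹ • ∑ j : Fin d, tensorVec (ket j) (ket j)) := by
  have hd0 : (0 : ℝ) < d := by positivity
  have hd1 : (1 : ℝ) ≤ (d : ℝ) := by exact_mod_cast Nat.one_le_of_lt hd
  refine ⟨fun t => dynamics hd t, ?_, ?_⟩
  · set T := Real.arccos (Real.sqrt d)⁻¹ with hT
    have hx0 : (0 : ℝ) ≤ (Real.sqrt d)⁻¹ := by positivity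
    have hx1 : (Real.sqrt d)⁻¹ ≤ 1 := by
      rw [inv_le_one_iff₀]
      right
      exact Real.one_le_sqrt.mpr hd1
    have hcos : Real.cos T = (Real.sqrt d)⁻¹ := Real.cos_arccos (by linarith) hx1
    have hsin : Real.sin T = Real.sqrt (1 - ((Real.sqrt d)⁻¹) ^ 2) := Real.sin_arccos _
    rw [dynamics hd T, hcos, hsin, ← Complex.ofReal_div, sqrt_div_lem hd,
      Complex.ofReal_inv, ← Complex.ofReal_inv, ← smul_add]
    rw [show (wvec d : Fin d × Fin d → ℂ) = wvec d from rfl] -- no-op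
    rw [← sum_split hd]
  · exact ⟨ket, ket, onb_ket, onb_ket, rfl⟩
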